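/- Let 0 < τ < 1, let E ⊆ ℝⁿ be measurable, and let Q be a cube with |Q ∩ E|/|Q| ≤ τ. Then |Q ∩ E| ≤ 2^n τ · |Q ∩ {Mχ_E > τ}|, where M is the dyadic-style Calderón–Zygmund maximal operator over subcubes. Consequently, for every x with Mχ_E(x) ≤ τ one has Mχ_E(x) ≤ 2^n τ · Mχ_{{Mχ_E > τ}}(x). -/

import Mathlib

open MeasureTheory Metric Set
open scoped ENNReal

/-- The uncentered Hardy–Littlewood maximal operator over cubes (= closed balls in the
sup metric on `ℝⁿ = Fin n → ℝ`), acting on `ℝ≥0∞`-valued functions. -/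
noncomputable def maximal {n : ℕ} (f : (Fin n → ℝ) → ℝ≥0∞) (x : Fin n → ℝ) : ℝ≥0∞ :=
  ⨆ (c : Fin n → ℝ) (r : ℝ) (_ : 0 < r) (_ : x ∈ closedBall c r),
    (volume (closedBall c r))⁻¹ * ∫⁻ y in closedBall c r, f y

/-- `Mχ_E`, the maximal function of the indicator of a set `E`. -/
noncomputable def maximalInd {n : ℕ} (E : Set (Fin n → ℝ)) (x : Fin n → ℝ) : ℝ≥0∞ :=
  maximal (E.indicator 1) x

open scoped NNReal

namespace StmtSix
variable {n : ℕ}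

lemma vol_cube (c : Fin n → ℝ) {r : ℝ} (hr : 0 ≤ r) :
    volume (closedBall c r) = ENNReal.ofReal ((2 * r) ^ n) := by
  rw [Real.volume_pi_closedBall c hr, Fintype.card_fin]

lemma vol_cube_ne_zero (c : Fin n → ℝ) {r : ℝ} (hr : 0 < r) :
    volume (closedBall c r) ≠ 0 := by
  rw [vol_cube c hr.le]
  simp only [ne_eq, ENNReal.ofReal_eq_zero, not_le]
  positivity

lemma vol_cube_ne_top (c : Fin n → ℝ) {r : ℝ} (hr : 0 ≤ r) :
    volume (closedBall c r) ≠ ⊤ := by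
  rw [vol_cube c hr]; exact ENNReal.ofReal_ne_top

/-- Center of the dyadic child cube indexed by `b`. -/
noncomputable def chc (c : Fin n → ℝ) (r : ℝ) (b : Fin n → Bool) : Fin n → ℝ :=
  fun i => c i + (if b i then r / 2 else -(r / 2))

lemma child_subset {c : Fin n → ℝ} {r : ℝ} (hr : 0 ≤ r) (b : Fin n → Bool) :
    closedBall (chc c r b) (r / 2) ⊆ closedBall c r := by
  intro x hx
  rw [mem_closedBall, dist_pi_le_iff (by linarith : (0:ℝ) ≤ r / 2)] at hx
  rw [mem_closedBall, dist_pi_le_iff hr]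
  intro i
  have h1 := hx i
  have h2 : dist (chc c r b i) (c i) ≤ r / 2 := by
    simp only [chc, Real.dist_eq]
    split <;> rw [abs_le] <;> constructor <;> linarith
  calc dist (x i) (c i) ≤ dist (x i) (chc c r b i) + dist (chc c r b i) (c i) := dist_triangle _ _ _
    _ ≤ r / 2 + r / 2 := add_le_add h1 h2
    _ = r := by ring

/-- Half-open partition piece. -/
def Jset (c : Fin n → ℝ) (r : ℝ) (b : Fin n → Bool) : Set (Fin n → ℝ) :=
  closedBall c r ∩ univ.pi (fun i => if b i then Ici (c i) else Iio (c i))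

lemma Jset_measurable (c : Fin n → ℝ) (r : ℝ) (b : Fin n → Bool) :
    MeasurableSet (Jset c r b) := by
  apply measurableSet_closedBall.inter
  apply MeasurableSet.univ_pi
  intro i
  split
  · exact measurableSet_Ici
  · exact measurableSet_Iio

lemma Jset_subset_child {c : Fin n → ℝ} {r : ℝ} (hr : 0 ≤ r) (b : Fin n → Bool) :
    Jset c r b ⊆ closedBall (chc c r b) (r / 2) := by
  rintro x ⟨hx1, hx2⟩
  rw [mem_closedBall, dist_pi_le_iff (by linarith)] at *
  intro i
  have h1 := hx1 i
  have h2 := hx2 i (mem_univ i)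
  simp only [chc, Real.dist_eq] at *
  rw [abs_le] at h1 ⊢
  by_cases hb : b i = true <;> simp [hb] at h2 ⊢ <;> constructor <;> linarith

lemma union_Jset (c : Fin n → ℝ) (r : ℝ) :
    ⋃ b : Fin n → Bool, Jset c r b = closedBall c r := by
  apply Subset.antisymm
  · exact iUnion_subset fun b => inter_subset_left
  · intro x hx
    refine mem_iUnion.2 ⟨fun i => decide (c i ≤ x i), hx, ?_⟩
    intro i _
    by_cases h : c i ≤ x i <;> simp [h]
    linarith

lemma Jset_disjoint (c : Fin n → ℝ) (r : ℝ) :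
    Pairwise (Function.onFun Disjoint fun b : Fin n → Bool => Jset c r b) := by
  intro b b' hbb'
  rw [Function.onFun, Set.disjoint_left]
  rintro x ⟨_, hx⟩ ⟨_, hx'⟩
  obtain ⟨i, hi⟩ : ∃ i, b i ≠ b' i := Function.ne_iff.1 hbb'
  have h1 := hx i (mem_univ i)
  have h2 := hx' i (mem_univ i)
  simp only at h1 h2
  by_cases hb : b i = true
  · have hb' : ¬ (b' i = true) := by simp_all
    rw [if_pos hb] at h1
    rw [if_neg hb'] at h2
    exact absurd (mem_Ici.1 h1) (not_le.2 (mem_Iio.1 h2))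
  · have hb' : b' i = true := by cases hbi : b' i <;> simp_all
    rw [if_neg hb] at h1
    rw [if_pos hb'] at h2
    exact absurd (mem_Ici.1 h2) (not_le.2 (mem_Iio.1 h1))

lemma child_diff_Jset_null (c : Fin n → ℝ) {r : ℝ} (hr : 0 ≤ r) (b : Fin n → Bool) :
    volume (closedBall (chc c r b) (r / 2) \ Jset c r b) = 0 := by
  apply measure_mono_null (t := ⋃ i, {x : Fin n → ℝ | x i = c i})
  · intro x ⟨hx1, hx2⟩
    have hxball : x ∈ closedBall c r := child_subset hr b hx1
    simp only [Jset, mem_inter_iff, hxball, true_and, mem_pi, mem_univ, forall_true_left,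
      not_forall] at hx2
    obtain ⟨i, hi⟩ := hx2
    rw [mem_closedBall, dist_pi_le_iff (by linarith)] at hx1
    have h1 := hx1 i
    simp only [chc, Real.dist_eq, abs_le] at h1
    refine mem_iUnion.2 ⟨i, ?_⟩
    by_cases hb : b i = true <;> simp [hb] at hi h1
    · linarith
    · simp only [mem_setOf_eq]
      linarith
  · apply measure_iUnion_null
    intro i
    rw [volume_pi]
    exact Measure.pi_hyperplane (fun _ => (volume : Measure ℝ)) i (c i)

/-- Sum of measures of sets inside the children is at most the measure of the union. -/
lemma sum_child_le {c : Fin n → ℝ} {r : ℝ} (hr : 0 ≤ r) (S : (Fin n → Bool) → Set (Fin n → ℝ))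
    (hm : ∀ b, MeasurableSet (S b)) (hsub : ∀ b, S b ⊆ closedBall (chc c r b) (r / 2)) :
    ∑' b, volume (S b) ≤ volume (⋃ b, S b) := by
  have key : ∀ b, volume (S b) = volume (S b ∩ Jset c r b) := by
    intro b
    apply le_antisymm
    · calc volume (S b) ≤ volume (S b ∩ Jset c r b) + volume (S b \ Jset c r b) :=
            measure_le_inter_add_diff _ _ _
        _ ≤ volume (S b ∩ Jset c r b) + volume (closedBall (chc c r b) (r / 2) \ Jset c r b) := by
            gcongr
            · exact hsub b
        _ = volume (S b ∩ Jset c r b) := by rw [child_diff_Jset_null c hr b, add_zero]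
    · exact measure_mono inter_subset_left
  calc ∑' b, volume (S b) = ∑' b, volume (S b ∩ Jset c r b) := by simp_rw [key]
    _ = volume (⋃ b, S b ∩ Jset c r b) := by
        rw [measure_iUnion]
        · exact fun b b' h => ((Jset_disjoint c r h).mono inter_subset_right inter_subset_right)
        · exact fun b => (hm b).inter (Jset_measurable c r b)
    _ ≤ volume (⋃ b, S b) := measure_mono (iUnion_mono fun b => inter_subset_left)

lemma cover_le {c : Fin n → ℝ} {r : ℝ} (hr : 0 ≤ r) (A : Set (Fin n → ℝ)) :
    volume (closedBall c r ∩ A) ≤ ∑' b, volume (closedBall (chc c r b) (r / 2) ∩ A) := by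
  calc volume (closedBall c r ∩ A) = volume (⋃ b, Jset c r b ∩ A) := by
        rw [← union_Jset c r, iUnion_inter]
    _ ≤ ∑' b, volume (Jset c r b ∩ A) := measure_iUnion_le _
    _ ≤ ∑' b, volume (closedBall (chc c r b) (r / 2) ∩ A) := by
        apply ENNReal.tsum_le_tsum
        intro b
        exact measure_mono (inter_subset_inter_left _ (Jset_subset_child hr b))

/-- The maximal operator over cubes (same as in the theorem statement). -/
noncomputable def maximal' (f : (Fin n → ℝ) → ℝ≥0∞) (x : Fin n → ℝ) : ℝ≥0∞ :=
  ⨆ (c : Fin n → ℝ) (r : ℝ) (_ : 0 < r) (_ : x ∈ closedBall c r),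
    (volume (closedBall c r))⁻¹ * ∫⁻ y in closedBall c r, f y

lemma setLintegral_ind {A : Set (Fin n → ℝ)} (hA : MeasurableSet A) (B : Set (Fin n → ℝ)) :
    ∫⁻ y in B, A.indicator 1 y = volume (A ∩ B) := by
  rw [lintegral_indicator_one hA, Measure.restrict_apply hA]

lemma avg_le_maximal {A : Set (Fin n → ℝ)} (hA : MeasurableSet A) {c : Fin n → ℝ} {r : ℝ}
    (hr : 0 < r) {x : Fin n → ℝ} (hx : x ∈ closedBall c r) :
    (volume (closedBall c r))⁻¹ * volume (A ∩ closedBall c r) ≤ maximal' (A.indicator 1) x := by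
  have h : (volume (closedBall c r))⁻¹ * volume (A ∩ closedBall c r) =
      (volume (closedBall c r))⁻¹ * ∫⁻ y in closedBall c r, A.indicator 1 y := by
    rw [setLintegral_ind hA]
  rw [h, maximal']
  exact le_iSup_of_le c (le_iSup_of_le r (le_iSup_of_le hr (le_iSup_of_le hx le_rfl)))

lemma isOpen_superlevel (f : (Fin n → ℝ) → ℝ≥0∞) (t : ℝ) :
    IsOpen {x : Fin n → ℝ | ENNReal.ofReal t < maximal' f x} := by
  rw [Metric.isOpen_iff]
  intro x hx
  simp only [mem_setOf_eq, maximal', lt_iSup_iff] at hx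
  obtain ⟨c, r, hr, hxB, hlt⟩ := hx
  set I := ∫⁻ y in closedBall c r, f y with hI
  have hv : volume (closedBall c r) = ENNReal.ofReal ((2 * r) ^ n) := vol_cube _ hr.le
  have hIv : ENNReal.ofReal t * ENNReal.ofReal ((2 * r) ^ n) < I := by
    have h1 : ENNReal.ofReal t < I / volume (closedBall c r) := by
      rwa [ENNReal.div_eq_inv_mul]
    have := (ENNReal.lt_div_iff_mul_lt (Or.inl (vol_cube_ne_zero c hr))
      (Or.inl (vol_cube_ne_top c hr.le))).1 h1
    rwa [hv] at this
  have cont : Continuous (fun s : ℝ => ENNReal.ofReal t * ENNReal.ofReal ((2 * s) ^ n)) := by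
    exact (ENNReal.continuous_const_mul ENNReal.ofReal_ne_top).comp
      (ENNReal.continuous_ofReal.comp (by continuity))
  have hopen : IsOpen {s : ℝ | ENNReal.ofReal t * ENNReal.ofReal ((2 * s) ^ n) < I} :=
    isOpen_lt cont continuous_const
  obtain ⟨ε, hε, hball⟩ := Metric.isOpen_iff.1 hopen r hIv
  set r' := r + ε / 2 with hr'def
  have hrr' : r < r' := by simp [hr'def]; linarith
  have hr' : 0 < r' := hr.trans hrr'
  have hmem : r' ∈ Metric.ball r ε := by
    simp [hr'def, Real.dist_eq, abs_of_nonneg hε.le]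
    linarith
  have key : ENNReal.ofReal t * volume (closedBall c r') <
      ∫⁻ y in closedBall c r', f y := by
    calc ENNReal.ofReal t * volume (closedBall c r')
        = ENNReal.ofReal t * ENNReal.ofReal ((2 * r') ^ n) := by rw [vol_cube _ hr'.le]
      _ < I := hball hmem
      _ ≤ ∫⁻ y in closedBall c r', f y :=
          lintegral_mono_set (closedBall_subset_closedBall hrr'.le)
  refine ⟨r' - r, by linarith, fun y hy => ?_⟩
  have hyB : y ∈ closedBall c r' := by
    rw [mem_closedBall]
    rw [mem_ball] at hy
    refine le_of_lt ?_
    calc dist y c ≤ dist y x + dist x c := dist_triangle _ _ _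
      _ < (r' - r) + r := by
          rw [mem_closedBall] at hxB
          exact add_lt_add_of_lt_of_le hy hxB
      _ = r' := by ring
  have h2 : ENNReal.ofReal t <
      (volume (closedBall c r'))⁻¹ * ∫⁻ y in closedBall c r', f y := by
    rw [← ENNReal.div_eq_inv_mul]
    exact (ENNReal.lt_div_iff_mul_lt (Or.inl (vol_cube_ne_zero c hr'))
      (Or.inl (vol_cube_ne_top c hr'.le))).2 key
  have h3 : (volume (closedBall c r'))⁻¹ * (∫⁻ y in closedBall c r', f y) ≤ maximal' f y := by
    rw [maximal']
    exact le_iSup_of_le c (le_iSup_of_le r' (le_iSup_of_le hr' (le_iSup_of_le hyB le_rfl)))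
  exact lt_of_lt_of_le h2 h3

variable (E : Set (Fin n → ℝ)) (τ : ℝ)

/-- A cube is *good* if the density of `E` in it is at most `τ`. -/
def isGood (c : Fin n → ℝ) (r : ℝ) : Prop :=
  volume (closedBall c r ∩ E) ≤ ENNReal.ofReal τ * volume (closedBall c r)

/-- The remainder set at depth `k` of the Calderón–Zygmund stopping time decomposition:
the union of the depth-`k` dyadic descendants all of whose ancestors are good. -/
noncomputable def Rk : ℕ → (Fin n → ℝ) → ℝ → Set (Fin n → ℝ)
  | 0, c, r => closedBall c r
  | k + 1, c, r => ⋃ b : Fin n → Bool, ⋃ (_ : isGood E τ (chc c r b) (r / 2)),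
      Rk k (chc c r b) (r / 2)

lemma Rk_subset : ∀ (k : ℕ) (c : Fin n → ℝ) (r : ℝ), 0 ≤ r → Rk E τ k c r ⊆ closedBall c r := by
  intro k
  induction k with
  | zero => intro c r _; rw [Rk]
  | succ k IH =>
    intro c r hr
    rw [Rk]
    refine iUnion_subset fun b => iUnion_subset fun _ => ?_
    exact (IH (chc c r b) (r / 2) (by linarith)).trans (child_subset hr b)

lemma Rk_measurable : ∀ (k : ℕ) (c : Fin n → ℝ) (r : ℝ), MeasurableSet (Rk E τ k c r) := by
  intro k
  induction k with
  | zero => intro c r; rw [Rk]; exact measurableSet_closedBall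
  | succ k IH =>
    intro c r
    rw [Rk]
    exact MeasurableSet.iUnion fun b => MeasurableSet.iUnion fun _ => IH _ _

lemma Rk_succ_subset : ∀ (k : ℕ) (c : Fin n → ℝ) (r : ℝ), 0 ≤ r →
    Rk E τ (k + 1) c r ⊆ Rk E τ k c r := by
  intro k
  induction k with
  | zero =>
    intro c r hr
    rw [Rk, Rk]
    refine iUnion_subset fun b => iUnion_subset fun _ => ?_
    rw [Rk]
    exact child_subset hr b
  | succ k IH =>
    intro c r hr
    show Rk E τ (k + 1 + 1) c r ⊆ Rk E τ (k + 1) c r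
    rw [show Rk E τ (k + 1 + 1) c r = ⋃ b : Fin n → Bool, ⋃ (_ : isGood E τ (chc c r b) (r / 2)),
      Rk E τ (k + 1) (chc c r b) (r / 2) from rfl]
    rw [show Rk E τ (k + 1) c r = ⋃ b : Fin n → Bool, ⋃ (_ : isGood E τ (chc c r b) (r / 2)),
      Rk E τ k (chc c r b) (r / 2) from rfl]
    refine iUnion_subset fun b => iUnion_subset fun hb => ?_
    refine subset_trans (IH (chc c r b) (r / 2) (by linarith)) ?_
    exact subset_iUnion_of_subset b (subset_iUnion (fun _ => Rk E τ k (chc c r b) (r / 2)) hb)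

lemma Rk_chain : ∀ (k : ℕ) (c : Fin n → ℝ) (r : ℝ), 0 < r →
    ∀ x ∈ Rk E τ (k + 1) c r, ∃ c', x ∈ closedBall c' (r / 2 ^ (k + 1)) ∧
      closedBall c' (r / 2 ^ (k + 1)) ⊆ closedBall c r ∧ isGood E τ c' (r / 2 ^ (k + 1)) := by
  intro k
  induction k with
  | zero =>
    intro c r hr x hx
    rw [Rk] at hx
    obtain ⟨b, hb, hx⟩ := mem_iUnion₂.1 hx
    rw [Rk] at hx
    refine ⟨chc c r b, ?_, ?_, ?_⟩
    · simpa [pow_one] using hx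
    · simpa [pow_one] using child_subset hr.le b
    · simpa [pow_one] using hb
  | succ k IH =>
    intro c r hr x hx
    rw [Rk] at hx
    obtain ⟨b, hb, hx⟩ := mem_iUnion₂.1 hx
    obtain ⟨c', h1, h2, h3⟩ := IH (chc c r b) (r / 2) (by linarith) x hx
    have heq : r / 2 / 2 ^ (k + 1) = r / 2 ^ (k + 1 + 1) := by ring
    rw [heq] at h1 h2 h3
    exact ⟨c', h1, h2.trans (child_subset hr.le b), h3⟩

lemma claim (hE : MeasurableSet E) (hτ0 : 0 < τ) (hF : MeasurableSet
      {x : Fin n → ℝ | ENNReal.ofReal τ < maximal' (E.indicator 1) x}) :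
    ∀ (k : ℕ) (c : Fin n → ℝ) (r : ℝ), 0 < r → isGood E τ c r →
    volume (closedBall c r ∩ E) ≤
      ENNReal.ofReal (2 ^ n * τ) *
        volume (closedBall c r ∩ {x | ENNReal.ofReal τ < maximal' (E.indicator 1) x})
      + volume (Rk E τ k c r ∩ E) := by
  classical
  set F := {x : Fin n → ℝ | ENNReal.ofReal τ < maximal' (E.indicator 1) x} with hFdef
  intro k
  induction k with
  | zero =>
    intro c r hr hg
    rw [Rk]
    exact le_add_self
  | succ k IH =>
    intro c r hr hg
    set g : (Fin n → Bool) → Set (Fin n → ℝ) := fun b =>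
      (if isGood E τ (chc c r b) (r / 2) then Rk E τ k (chc c r b) (r / 2) else ∅) ∩ E with hgdef
    have hg_meas : ∀ b, MeasurableSet (g b) := by
      intro b
      refine MeasurableSet.inter ?_ hE
      split
      · exact Rk_measurable E τ k _ _
      · exact MeasurableSet.empty
    have hg_sub : ∀ b, g b ⊆ closedBall (chc c r b) (r / 2) := by
      intro b
      refine inter_subset_left.trans ?_
      split
      · exact Rk_subset E τ k _ _ (by linarith)
      · exact empty_subset _
    have hchild : ∀ b, volume (closedBall (chc c r b) (r / 2) ∩ E) ≤
        ENNReal.ofReal (2 ^ n * τ) * volume (closedBall (chc c r b) (r / 2) ∩ F)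
          + volume (g b) := by
      intro b
      by_cases hb : isGood E τ (chc c r b) (r / 2)
      · have := IH (chc c r b) (r / 2) (by linarith) hb
        simp only [hgdef, if_pos hb]
        exact this
      · -- bad child : it is contained in F
        have hsubF : closedBall (chc c r b) (r / 2) ⊆ F := by
          intro y hy
          have hlt : ENNReal.ofReal τ <
              (volume (closedBall (chc c r b) (r / 2)))⁻¹ *
                volume (E ∩ closedBall (chc c r b) (r / 2)) := by
            rw [← ENNReal.div_eq_inv_mul]
            refine (ENNReal.lt_div_iff_mul_lt
              (Or.inl (vol_cube_ne_zero _ (by linarith)))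
              (Or.inl (vol_cube_ne_top _ (by linarith)))).2 ?_
            rw [inter_comm]
            exact lt_of_not_ge fun h => hb h
          exact mem_setOf.2 (lt_of_lt_of_le hlt (avg_le_maximal hE (by linarith) hy))
        have hFeq : closedBall (chc c r b) (r / 2) ∩ F = closedBall (chc c r b) (r / 2) :=
          inter_eq_self_of_subset_left hsubF
        have h1 : volume (closedBall (chc c r b) (r / 2) ∩ E) ≤
            ENNReal.ofReal (2 ^ n * τ) * volume (closedBall (chc c r b) (r / 2) ∩ F) := by
          rw [hFeq]
          calc volume (closedBall (chc c r b) (r / 2) ∩ E)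
              ≤ volume (closedBall c r ∩ E) :=
                measure_mono (inter_subset_inter_left _ (child_subset hr.le b))
            _ ≤ ENNReal.ofReal τ * volume (closedBall c r) := hg
            _ = ENNReal.ofReal (2 ^ n * τ) * volume (closedBall (chc c r b) (r / 2)) := by
                rw [vol_cube _ hr.le, vol_cube _ (by linarith : (0:ℝ) ≤ r / 2),
                  ← ENNReal.ofReal_mul hτ0.le,
                  ← ENNReal.ofReal_mul (by positivity : (0:ℝ) ≤ 2 ^ n * τ)]
                congr 1
                rw [mul_pow]
                ring_nf
        exact h1.trans le_self_add
    calc volume (closedBall c r ∩ E)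
        ≤ ∑' b, volume (closedBall (chc c r b) (r / 2) ∩ E) := cover_le hr.le E
      _ ≤ ∑' b, (ENNReal.ofReal (2 ^ n * τ) * volume (closedBall (chc c r b) (r / 2) ∩ F)
            + volume (g b)) := ENNReal.tsum_le_tsum hchild
      _ = ENNReal.ofReal (2 ^ n * τ) * ∑' b, volume (closedBall (chc c r b) (r / 2) ∩ F)
            + ∑' b, volume (g b) := by rw [ENNReal.tsum_add, ENNReal.tsum_mul_left]
      _ ≤ ENNReal.ofReal (2 ^ n * τ) * volume (closedBall c r ∩ F)
            + volume (Rk E τ (k + 1) c r ∩ E) := by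
          gcongr
          · calc ∑' b, volume (closedBall (chc c r b) (r / 2) ∩ F)
                ≤ volume (⋃ b, closedBall (chc c r b) (r / 2) ∩ F) :=
                  sum_child_le hr.le _ (fun b => measurableSet_closedBall.inter hF)
                    (fun b => inter_subset_left)
              _ ≤ volume (closedBall c r ∩ F) := by
                  refine measure_mono (iUnion_subset fun b => ?_)
                  exact inter_subset_inter_left _ (child_subset hr.le b)
          · calc ∑' b, volume (g b)
                ≤ volume (⋃ b, g b) := sum_child_le hr.le g hg_meas hg_sub
              _ ≤ volume (Rk E τ (k + 1) c r ∩ E) := by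
                  refine measure_mono (iUnion_subset fun b => ?_)
                  show (if isGood E τ (chc c r b) (r / 2) then Rk E τ k (chc c r b) (r / 2)
                    else ∅) ∩ E ⊆ Rk E τ (k + 1) c r ∩ E
                  split
                  · rename_i hb
                    rw [Rk]
                    refine inter_subset_inter_left _ ?_
                    exact subset_iUnion_of_subset b (subset_iUnion (fun _ => Rk E τ k (chc c r b) (r / 2)) hb)
                  · simp

lemma coe6 : (((6 : ℝ≥0) ^ n : ℝ≥0) : ℝ≥0∞) = ENNReal.ofReal ((6 : ℝ) ^ n) := by
  rw [ENNReal.ofReal_pow (by norm_num : (0:ℝ) ≤ 6)]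
  rw [ENNReal.coe_pow]
  norm_num

lemma iInter_null (hE : MeasurableSet E) (hτ1 : τ < 1)
    (c : Fin n → ℝ) {r : ℝ} (hr : 0 < r) :
    volume ((⋂ k, Rk E τ k c r) ∩ E) = 0 := by
  have doubling : ∀ x : Fin n → ℝ, ∃ᶠ s in nhdsWithin 0 (Ioi 0),
      volume (closedBall x (3 * s)) ≤ ((6 : ℝ≥0) ^ n : ℝ≥0) * volume (closedBall x s) := by
    intro x
    apply Filter.Eventually.frequently
    filter_upwards [self_mem_nhdsWithin] with s hs
    have hs0 : (0:ℝ) < s := hs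
    rw [vol_cube _ (by linarith : (0:ℝ) ≤ 3 * s), vol_cube _ hs0.le, coe6,
      ← ENNReal.ofReal_mul (by positivity)]
    apply ENNReal.ofReal_le_ofReal
    calc (2 * (3 * s)) ^ n ≤ (6 * (2 * s)) ^ n := by
          apply pow_le_pow_left₀ (by positivity)
          linarith
      _ = 6 ^ n * (2 * s) ^ n := mul_pow 6 (2 * s) n
  let v : VitaliFamily (volume : Measure (Fin n → ℝ)) :=
    Vitali.vitaliFamily volume (6 ^ n) doubling
  have hae := v.ae_tendsto_measure_inter_div_of_measurableSet hE
  refine measure_mono_null ?_ (ae_iff.1 hae)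
  intro x hx
  simp only [mem_setOf_eq]
  intro hT
  have hxRk : ∀ k : ℕ, x ∈ Rk E τ (k + 1) c r := fun k => (mem_iInter.1 hx.1) (k + 1)
  choose c' h1 h2 h3 using fun k => Rk_chain E τ k c r hr x (hxRk k)
  set a : ℕ → Set (Fin n → ℝ) := fun k => closedBall (c' k) (r / 2 ^ (k + 1)) with ha
  have rpos : ∀ k : ℕ, (0:ℝ) < r / 2 ^ (k + 1) := fun k => by positivity
  have hsub : ∀ k, a k ⊆ closedBall x (2 * (r / 2 ^ (k + 1))) := by
    intro k
    apply closedBall_subset_closedBall'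
    have : dist (c' k) x ≤ r / 2 ^ (k + 1) := by
      rw [dist_comm]
      exact mem_closedBall.1 (h1 k)
    linarith
  have hsets : ∀ k, a k ∈ v.setsAt x := by
    intro k
    show a k ∈ { s | IsClosed s ∧ (interior s).Nonempty ∧
      ∃ ρ, s ⊆ closedBall x ρ ∧
        volume (closedBall x (3 * ρ)) ≤ ((6:ℝ≥0) ^ n : ℝ≥0) * volume s }
    refine ⟨isClosed_closedBall, ?_, ⟨2 * (r / 2 ^ (k + 1)), hsub k, ?_⟩⟩
    · exact (nonempty_ball.2 (rpos k)).mono ball_subset_interior_closedBall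
    · rw [ha]
      rw [vol_cube _ (by positivity : (0:ℝ) ≤ 3 * (2 * (r / 2 ^ (k + 1)))),
        vol_cube _ (rpos k).le, coe6, ← ENNReal.ofReal_mul (by positivity)]
      apply ENNReal.ofReal_le_ofReal
      rw [← mul_pow]
      apply pow_le_pow_left₀ (by positivity)
      linarith [rpos k]
  have htends : Filter.Tendsto a Filter.atTop (v.filterAt x) := by
    rw [v.tendsto_filterAt_iff]
    constructor
    · exact Filter.Eventually.of_forall hsets
    · intro ε hε
      obtain ⟨N, hN⟩ := exists_pow_lt_of_lt_one (show (0:ℝ) < ε / r by positivity)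
        (by norm_num : (1:ℝ)/2 < 1)
      rw [Filter.eventually_atTop]
      refine ⟨N, fun k hk => ?_⟩
      refine (hsub k).trans (closedBall_subset_closedBall ?_)
      have h2k : ((1:ℝ)/2) ^ k ≤ ((1:ℝ)/2) ^ N :=
        pow_le_pow_of_le_one (by norm_num) (by norm_num) hk
      have hlt : ((1:ℝ)/2) ^ k < ε / r := lt_of_le_of_lt h2k hN
      have heq : 2 * (r / 2 ^ (k + 1)) = r * ((1:ℝ)/2) ^ k := by
        rw [div_pow, one_pow]
        field_simp
        ring
      rw [heq]
      have hmul : r * ((1:ℝ)/2) ^ k < r * (ε / r) := mul_lt_mul_of_pos_left hlt hr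
      have hre : r * (ε / r) = ε := by field_simp
      linarith
  have hlim := hT.comp htends
  have hone : E.indicator (1 : (Fin n → ℝ) → ℝ≥0∞) x = 1 := indicator_of_mem hx.2 1
  have hb : ∀ k, volume (E ∩ a k) / volume (a k) ≤ ENNReal.ofReal τ := by
    intro k
    rw [ENNReal.div_le_iff_le_mul (Or.inl (vol_cube_ne_zero _ (rpos k)))
      (Or.inl (vol_cube_ne_top _ (rpos k).le)), inter_comm]
    exact h3 k
  have hle : (1 : ℝ≥0∞) ≤ ENNReal.ofReal τ := by
    rw [hone] at hlim
    exact le_of_tendsto hlim (Filter.Eventually.of_forall hb)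
  exact absurd hle (not_le.2 (ENNReal.ofReal_lt_one.2 hτ1))

lemma partA (hE : MeasurableSet E) (hτ0 : 0 < τ) (hτ1 : τ < 1) (c : Fin n → ℝ) {r : ℝ}
    (hr : 0 < r)
    (hyp : volume (closedBall c r ∩ E) ≤ ENNReal.ofReal τ * volume (closedBall c r)) :
    volume (closedBall c r ∩ E) ≤ ENNReal.ofReal (2 ^ n * τ) *
      volume (closedBall c r ∩ {x | ENNReal.ofReal τ < maximal' (E.indicator 1) x}) := by
  have hF : MeasurableSet {x : Fin n → ℝ | ENNReal.ofReal τ < maximal' (E.indicator 1) x} :=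
    (isOpen_superlevel (E.indicator 1) τ).measurableSet
  have h1 := claim E τ hE hτ0 hF
  have hanti : Antitone (fun k => Rk E τ k c r ∩ E) := by
    apply antitone_nat_of_succ_le
    intro k
    exact inter_subset_inter_left _ (Rk_succ_subset E τ k c r hr.le)
  have hmeas : ∀ k, NullMeasurableSet (Rk E τ k c r ∩ E) volume :=
    fun k => ((Rk_measurable E τ k c r).inter hE).nullMeasurableSet
  have hfin : ∃ k, volume (Rk E τ k c r ∩ E) ≠ ⊤ := by
    refine ⟨0, ne_top_of_le_ne_top (vol_cube_ne_top c hr.le) (measure_mono ?_)⟩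
    rw [Rk]
    exact inter_subset_left
  have htendsto := tendsto_measure_iInter_atTop hmeas hanti hfin
  rw [show (⋂ k, Rk E τ k c r ∩ E) = (⋂ k, Rk E τ k c r) ∩ E from (iInter_inter E (fun k => Rk E τ k c r)).symm,
    iInter_null E τ hE hτ1 c hr] at htendsto
  have hadd := Filter.Tendsto.const_add (ENNReal.ofReal (2 ^ n * τ) *
    volume (closedBall c r ∩ {x | ENNReal.ofReal τ < maximal' (E.indicator 1) x})) htendsto
  rw [add_zero] at hadd
  exact ge_of_tendsto hadd (Filter.Eventually.of_forall fun k => h1 k c r hr hyp)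

end StmtSix

/-- Let `0 < τ < 1` and `E` measurable. (a) If a cube `Q` satisfies
`|Q ∩ E| ≤ τ|Q|`, then `|Q ∩ E| ≤ 2^n τ |Q ∩ {Mχ_E > τ}|`. (b) Consequently, for
every `x` with `Mχ_E(x) ≤ τ`, `Mχ_E(x) ≤ 2^n τ · Mχ_{{Mχ_E > τ}}(x)`. -/
theorem stmt6 {n : ℕ} (τ : ℝ) (hτ0 : 0 < τ) (hτ1 : τ < 1)
    (E : Set (Fin n → ℝ)) (hE : MeasurableSet E) :
    (∀ (c : Fin n → ℝ) (r : ℝ), 0 < r →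
      volume (closedBall c r ∩ E) ≤ ENNReal.ofReal τ * volume (closedBall c r) →
      volume (closedBall c r ∩ E) ≤ ENNReal.ofReal (2 ^ n * τ) *
        volume (closedBall c r ∩ {x | ENNReal.ofReal τ < maximalInd E x})) ∧
    (∀ x : Fin n → ℝ, maximalInd E x ≤ ENNReal.ofReal τ →
      maximalInd E x ≤ ENNReal.ofReal (2 ^ n * τ) *
        maximalInd {y | ENNReal.ofReal τ < maximalInd E y} x) := by
  constructor
  · intro c r hr hyp
    exact StmtSix.partA E τ hE hτ0 hτ1 c hr hyp
  · intro x hx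
    have hF : MeasurableSet {y : Fin n → ℝ | ENNReal.ofReal τ < maximalInd E y} :=
      (StmtSix.isOpen_superlevel (E.indicator 1) τ).measurableSet
    set F := {y : Fin n → ℝ | ENNReal.ofReal τ < maximalInd E y} with hFdef
    show maximal (E.indicator 1) x ≤ _
    rw [maximal]
    refine iSup_le fun c => iSup_le fun r => iSup_le fun hr => iSup_le fun hxB => ?_
    have hterm : (volume (closedBall c r))⁻¹ * ∫⁻ y in closedBall c r, E.indicator 1 y =
        (volume (closedBall c r))⁻¹ * volume (E ∩ closedBall c r) := by
      rw [StmtSix.setLintegral_ind hE]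
    rw [hterm]
    have hle : (volume (closedBall c r))⁻¹ * volume (E ∩ closedBall c r) ≤ ENNReal.ofReal τ :=
      le_trans (StmtSix.avg_le_maximal hE hr hxB) hx
    have hyp : volume (closedBall c r ∩ E) ≤ ENNReal.ofReal τ * volume (closedBall c r) := by
      rw [inter_comm]
      rw [← ENNReal.div_eq_inv_mul] at hle
      exact (ENNReal.div_le_iff_le_mul (Or.inl (StmtSix.vol_cube_ne_zero c hr))
        (Or.inl (StmtSix.vol_cube_ne_top c hr.le))).1 hle
    have hA := StmtSix.partA E τ hE hτ0 hτ1 c hr hyp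
    calc (volume (closedBall c r))⁻¹ * volume (E ∩ closedBall c r)
        ≤ (volume (closedBall c r))⁻¹ *
            (ENNReal.ofReal (2 ^ n * τ) * volume (closedBall c r ∩ F)) := by
          apply mul_le_mul_right
          rw [inter_comm]
          exact hA
      _ = ENNReal.ofReal (2 ^ n * τ) *
            ((volume (closedBall c r))⁻¹ * volume (F ∩ closedBall c r)) := by
          rw [inter_comm F]
          ring
      _ ≤ ENNReal.ofReal (2 ^ n * τ) * maximalInd F x := by
          apply mul_le_mul_right
          exact StmtSix.avg_le_maximal hF hr hxB
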